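/- There is an absolute constant C > 0 such that for every 0 < θ < 1 and every odd prime p the following holds: let V ⊆ ℤ/pℤ be the union of the two intervals of residues I₀ = {0, 1, ..., ⌊θp/2⌋} and I₁ = {⌈p/2⌉, ⌈p/2⌉+1, ..., ⌈p/2⌉+⌊θp/2⌋} (taken modulo p). Then the number of 3APs (trivial and nontrivial) lying in V is at least θ²p²/2 − C·p. -/
import Mathlib


/-- The number of three-term arithmetic progressions in `S ⊆ ℤ/pℤ`, i.e. the number of
ordered pairs `(n, m)` of residues with `n, n + m, n + 2m ∈ S` (trivial and nontrivial).
Such pairs are counted via the equivalent, bijective encoding `(n, m) ↦ (n, n + m)`,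
a pair `(x, y) ∈ S × S` with `n + 2m = 2y - x ∈ S`. -/
def threeAPCount {p : ℕ} (S : Finset (ZMod p)) : ℕ :=
  ((S ×ˢ S).filter fun q => 2 * q.2 - q.1 ∈ S).card

lemma aux_count (p k hh : ℕ) (hh2 : 2 * hh = p + 1) (hkp : 2 * k < p) :
    4 * (k * ((k - 2) / 2)) ≤
      threeAPCount
        (((Finset.range (k + 1)).image fun j : ℕ => (j : ZMod p)) ∪
          ((Finset.range (k + 1)).image fun j : ℕ => ((hh + j : ℕ) : ZMod p))) := by
  haveI : NeZero p := ⟨by omega⟩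
  set S := (((Finset.range (k + 1)).image fun j : ℕ => (j : ZMod p)) ∪
      ((Finset.range (k + 1)).image fun j : ℕ => ((hh + j : ℕ) : ZMod p))) with hS
  have hS0 : ∀ j : ℕ, j ≤ k → (j : ZMod p) ∈ S := fun j hj =>
    Finset.mem_union_left _ (Finset.mem_image.2 ⟨j, Finset.mem_range.2 (by omega), rfl⟩)
  have hS1 : ∀ j : ℕ, j ≤ k → ((hh + j : ℕ) : ZMod p) ∈ S := fun j hj =>
    Finset.mem_union_right _ (Finset.mem_image.2 ⟨j, Finset.mem_range.2 (by omega), rfl⟩)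
  have key : (2 : ZMod p) * ((hh : ℕ) : ZMod p) = 1 := by
    have h1 := congrArg (Nat.cast (R := ZMod p)) hh2
    push_cast at h1
    rw [ZMod.natCast_self] at h1
    simpa using h1
  have castinj : ∀ m n : ℕ, m < p → n < p → ((m : ZMod p) = (n : ZMod p)) → m = n := by
    intro m n hm hn h
    have := congrArg ZMod.val h
    rwa [ZMod.val_cast_of_lt hm, ZMod.val_cast_of_lt hn] at this
  set A : Finset ((ℕ × ℕ) × Σ _ : ℕ, ℕ) :=
    (Finset.range 2 ×ˢ Finset.range 2) ×ˢ
      ((Finset.range k).sigma fun x => Finset.Ico ((x + 2) / 2) ((x + k - 1) / 2 + 1)) with hA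
  set f : ((ℕ × ℕ) × Σ _ : ℕ, ℕ) → ZMod p × ZMod p :=
    fun q => (((q.2.1 + q.1.1 * hh : ℕ) : ZMod p), ((q.2.2 + q.1.2 * hh : ℕ) : ZMod p)) with hf
  have hsub : A.image f ⊆ (S ×ˢ S).filter fun q => 2 * q.2 - q.1 ∈ S := by
    intro z hz
    obtain ⟨q, hq, rfl⟩ := Finset.mem_image.1 hz
    obtain ⟨⟨a, b⟩, ⟨x, y⟩⟩ := q
    simp only [hA, Finset.mem_product, Finset.mem_sigma, Finset.mem_Ico,
      Finset.mem_range] at hq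
    obtain ⟨⟨ha, hb⟩, hx, hy1, hy2⟩ := hq
    have hx1 : x + 1 ≤ 2 * y := by omega
    have hx2 : 2 * y + 1 ≤ x + k := by omega
    set d := 2 * y - x with hd
    have hdeq : x + d = 2 * y := by omega
    have hdc : (x : ZMod p) + (d : ZMod p) = 2 * (y : ZMod p) := by
      have := congrArg (Nat.cast (R := ZMod p)) hdeq
      push_cast at this
      exact this
    have he1 : x + 1 + (d - 1) = 2 * y := by omega
    have hec : (x : ZMod p) + 1 + ((d - 1 : ℕ) : ZMod p) = 2 * (y : ZMod p) := by
      have := congrArg (Nat.cast (R := ZMod p)) he1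
      push_cast at this
      exact this
    refine Finset.mem_filter.2 ⟨Finset.mem_product.2 ⟨?_, ?_⟩, ?_⟩
    · simp only [hf]
      interval_cases a
      · simpa using hS0 x (by omega)
      · rw [show x + 1 * hh = hh + x by ring]; exact hS1 x (by omega)
    · simp only [hf]
      interval_cases b
      · simpa using hS0 y (by omega)
      · rw [show y + 1 * hh = hh + y by ring]; exact hS1 y (by omega)
    · simp only [hf]
      interval_cases a <;> interval_cases b
      · refine Finset.mem_union_left _ (Finset.mem_image.2 ⟨d, Finset.mem_range.2 (by omega), ?_⟩)
        push_cast
        linear_combination hdc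
      · refine Finset.mem_union_left _
          (Finset.mem_image.2 ⟨d + 1, Finset.mem_range.2 (by omega), ?_⟩)
        push_cast
        linear_combination hdc - key
      · refine Finset.mem_union_right _
          (Finset.mem_image.2 ⟨d - 1, Finset.mem_range.2 (by omega), ?_⟩)
        push_cast
        linear_combination hec + key
      · refine Finset.mem_union_right _
          (Finset.mem_image.2 ⟨d, Finset.mem_range.2 (by omega), ?_⟩)
        push_cast
        linear_combination hdc
  have hinj : Set.InjOn f A := by
    intro q1 hq1 q2 hq2 heq
    obtain ⟨⟨a1, b1⟩, ⟨x1, y1⟩⟩ := q1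
    obtain ⟨⟨a2, b2⟩, ⟨x2, y2⟩⟩ := q2
    simp only [hA, Finset.mem_coe, Finset.mem_product, Finset.mem_sigma, Finset.mem_Ico,
      Finset.mem_range] at hq1 hq2
    obtain ⟨⟨ha1, hb1⟩, hx1, hy11, hy12⟩ := hq1
    obtain ⟨⟨ha2, hb2⟩, hx2, hy21, hy22⟩ := hq2
    simp only [hf, Prod.mk.injEq] at heq
    obtain ⟨h1, h2⟩ := heq
    simp only [Prod.mk.injEq, Sigma.ext_iff, heq_eq_eq]
    interval_cases a1 <;> interval_cases a2 <;> interval_cases b1 <;> interval_cases b2 <;>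
      (have e1 := castinj _ _ (by omega) (by omega) h1
       have e2 := castinj _ _ (by omega) (by omega) h2
       omega)
  have hsum : ∀ x ∈ Finset.range k,
      (k - 2) / 2 ≤ (Finset.Ico ((x + 2) / 2) ((x + k - 1) / 2 + 1)).card := by
    intro x hx
    rw [Nat.card_Ico]
    have := Finset.mem_range.1 hx
    omega
  have hAcard : 4 * (k * ((k - 2) / 2)) ≤ A.card := by
    rw [hA, Finset.card_product, Finset.card_product, Finset.card_sigma]
    have h := Finset.card_nsmul_le_sum (Finset.range k) _ ((k - 2) / 2) hsum
    simp only [Finset.card_range, smul_eq_mul] at h ⊢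
    omega
  calc 4 * (k * ((k - 2) / 2)) ≤ A.card := hAcard
    _ = (A.image f).card := (Finset.card_image_of_injOn hinj).symm
    _ ≤ ((S ×ˢ S).filter fun q => 2 * q.2 - q.1 ∈ S).card := Finset.card_le_card hsub

/-- There is an absolute constant `C > 0` such that for every `0 < θ < 1` and odd prime
`p`: if `V ⊆ ℤ/pℤ` is the union of the intervals of residues `I₀ = {0, ..., ⌊θp/2⌋}` and
`I₁ = {⌈p/2⌉, ..., ⌈p/2⌉ + ⌊θp/2⌋}`, then `V` contains at least `θ²p²/2 - Cp` 3APs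
(trivial and nontrivial). -/
theorem union_of_two_intervals_has_many_aps :
    ∃ C : ℝ, 0 < C ∧ ∀ θ : ℝ, 0 < θ → θ < 1 → ∀ p : ℕ, p.Prime → Odd p →
      θ ^ 2 * (p : ℝ) ^ 2 / 2 - C * p ≤
        (threeAPCount
          (((Finset.range (⌊θ * p / 2⌋₊ + 1)).image fun j : ℕ => (j : ZMod p)) ∪
            ((Finset.range (⌊θ * p / 2⌋₊ + 1)).image
              fun j : ℕ => ((⌈(p : ℝ) / 2⌉₊ + j : ℕ) : ZMod p))) : ℝ) := by
  refine ⟨100, by norm_num, ?_⟩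
  intro θ hθ0 hθ1 p hp hodd
  obtain ⟨t, ht⟩ := hodd
  have hp2 : 2 ≤ p := hp.two_le
  have hhval : ⌈(p : ℝ) / 2⌉₊ = t + 1 := by
    rw [Nat.ceil_eq_iff (by omega)]
    subst ht
    push_cast [Nat.add_sub_cancel]
    constructor <;> linarith
  have hh2 : 2 * ⌈(p : ℝ) / 2⌉₊ = p + 1 := by omega
  have hkR : (⌊θ * p / 2⌋₊ : ℝ) ≤ θ * p / 2 := Nat.floor_le (by positivity)
  have hppos : (0 : ℝ) < p := by exact_mod_cast hp.pos
  have hkp : 2 * ⌊θ * (p : ℝ) / 2⌋₊ < p := by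
    by_contra hcon
    push_neg at hcon
    have h1 : (p : ℝ) ≤ 2 * ⌊θ * (p : ℝ) / 2⌋₊ := by exact_mod_cast hcon
    nlinarith
  have haux := aux_count p ⌊θ * (p : ℝ) / 2⌋₊ ⌈(p : ℝ) / 2⌉₊ hh2 hkp
  set k := ⌊θ * (p : ℝ) / 2⌋₊ with hkdef
  have hflt : θ * p / 2 < k + 1 := Nat.lt_floor_add_one _
  set m := (k - 2) / 2 with hmdef
  have hm : (k : ℝ) - 3 ≤ 2 * (m : ℝ) := by
    have h : (k : ℝ) ≤ 2 * (m : ℝ) + 3 := by exact_mod_cast (by omega : k ≤ 2 * m + 3)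
    linarith
  have hcount : 4 * ((k : ℝ) * (m : ℝ)) ≤ (threeAPCount
          (((Finset.range (k + 1)).image fun j : ℕ => (j : ZMod p)) ∪
            ((Finset.range (k + 1)).image
              fun j : ℕ => ((⌈(p : ℝ) / 2⌉₊ + j : ℕ) : ZMod p))) : ℝ) := by
    exact_mod_cast haux
  have hpR : (2 * k : ℝ) < p := by exact_mod_cast hkp
  have hpR2 : (2 : ℝ) ≤ p := by exact_mod_cast hp2
  have hθp : θ * p ≤ 2 * (k : ℝ) + 2 := by linarith
  have h0 : 0 ≤ θ * p := by positivity
  have hsq : (θ * p) * (θ * p) ≤ (2 * (k : ℝ) + 2) * (2 * (k : ℝ) + 2) :=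
    mul_le_mul hθp hθp h0 (by positivity)
  have hk0 : (0 : ℝ) ≤ k := Nat.cast_nonneg k
  have hprod := mul_le_mul_of_nonneg_left hm (show (0 : ℝ) ≤ 2 * k by positivity)
  nlinarith [hcount, hsq, hprod, hpR, hpR2, hk0]
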